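/- Let S and R be finite sets, N a real S×R matrix, W = range(N), W^⊥ = ker(Nᵀ), and fix i ∈ S. Let u* be an elementary vector of W^⊥ with u*_i ≠ 0. Then there exist a set S' ⊆ S, for each s ∈ S' an elementary vector w^s ∈ W, and for each s ∈ S∖S' an elementary vector u^s ∈ W^⊥, such that: (a) i ∉ S' and supp(u*) ⊆ S' ∪ {i}; (b) for each s ∈ S', supp(w^s) ⊆ (S∖S') ∪ {s} and (w^s)_s = 1; and (c) for each s ∈ S∖S', supp(u^s) ⊆ S' ∪ {s} and (u^s)_s = 1. -/

import Mathlib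

open Matrix Set

/-- A vector `v` is elementary in a linear subspace `V ⊆ ℝ^S` if `v ∈ V`, `v ≠ 0`, and no
nonzero `v' ∈ V` has support strictly contained in the support of `v`. -/
def IsElementary {S : Type*} (V : Submodule ℝ (S → ℝ)) (v : S → ℝ) : Prop :=
  v ∈ V ∧ v ≠ 0 ∧ ∀ v' ∈ V, v' ≠ 0 → ¬ Function.support v' ⊂ Function.support v

private lemma isElementary_smul {S : Type*} {V : Submodule ℝ (S → ℝ)} {v : S → ℝ}
    (h : IsElementary V v) {c : ℝ} (hc : c ≠ 0) : IsElementary V (c • v) := by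
  obtain ⟨hv, h0, hmin⟩ := h
  refine ⟨V.smul_mem c hv, smul_ne_zero hc h0, ?_⟩
  intro v' hv' h0'
  rw [Function.support_const_smul_of_ne_zero c v hc]
  exact hmin v' hv' h0'

private lemma exists_elementary_aux {S : Type*} [Fintype S] (V : Submodule ℝ (S → ℝ)) :
    ∀ (n : ℕ) (v : S → ℝ), (Function.support v).ncard ≤ n → v ∈ V → v ≠ 0 →
      ∃ w, Function.support w ⊆ Function.support v ∧ IsElementary V w := by
  intro n
  induction n with
  | zero =>
    intro v hn hv h0
    exfalso
    apply h0
    have hfin : (Function.support v).Finite := Set.toFinite _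
    have hemp : Function.support v = ∅ := by
      rw [← Set.ncard_eq_zero hfin]
      omega
    exact Function.support_eq_empty_iff.mp hemp
  | succ n ih =>
    intro v hn hv h0
    by_cases h : ∀ v' ∈ V, v' ≠ 0 → ¬ Function.support v' ⊂ Function.support v
    · exact ⟨v, subset_rfl, hv, h0, h⟩
    · push_neg at h
      obtain ⟨v', hv', h0', hss⟩ := h
      have hlt : (Function.support v').ncard < (Function.support v).ncard :=
        Set.ncard_lt_ncard hss (Set.toFinite _)
      obtain ⟨w, hsub, hw⟩ := ih v' (by omega) hv' h0'
      exact ⟨w, hsub.trans hss.subset, hw⟩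

private lemma exists_elementary {S : Type*} [Fintype S] (V : Submodule ℝ (S → ℝ))
    {v : S → ℝ} (hv : v ∈ V) (h0 : v ≠ 0) :
    ∃ w, Function.support w ⊆ Function.support v ∧ IsElementary V w :=
  exists_elementary_aux V _ v le_rfl hv h0

private lemma surjective_mulVecLin {α β : Type*} [Fintype α] [Fintype β]
    (M : Matrix α β ℝ) (h : ∀ u : α → ℝ, Mᵀ.mulVec u = 0 → u = 0) :
    Function.Surjective M.mulVecLin := by
  rw [← LinearMap.range_eq_top]
  have hker : LinearMap.ker Mᵀ.mulVecLin = ⊥ := by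
    rw [LinearMap.ker_eq_bot']
    intro u hu
    exact h u (by rw [Matrix.mulVec_transpose]; simpa using hu)
  have hrk : Mᵀ.rank = Fintype.card α := by
    have hrn := LinearMap.finrank_range_add_finrank_ker Mᵀ.mulVecLin
    rw [hker, finrank_bot, add_zero] at hrn
    rw [Matrix.rank]
    rw [hrn, Module.finrank_pi]
  have hrk2 : M.rank = Fintype.card α := by
    rw [← Matrix.rank_transpose M, hrk]
  apply Submodule.eq_top_of_finrank_eq
  rw [← Matrix.rank, hrk2, Module.finrank_pi]

theorem elementary_basis_exchange
    {S R : Type*} [Fintype S] [Fintype R]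
    (N : Matrix S R ℝ) (i : S) (ustar : S → ℝ)
    (hustar : IsElementary (LinearMap.ker Nᵀ.mulVecLin) ustar)
    (hi : ustar i ≠ 0) :
    ∃ (S' : Set S) (w : S → (S → ℝ)) (u : S → (S → ℝ)),
      i ∉ S' ∧ Function.support ustar ⊆ S' ∪ {i} ∧
      (∀ s ∈ S', IsElementary (LinearMap.range N.mulVecLin) (w s) ∧
        Function.support (w s) ⊆ S'ᶜ ∪ {s} ∧ w s s = 1) ∧
      (∀ s ∉ S', IsElementary (LinearMap.ker Nᵀ.mulVecLin) (u s) ∧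
        Function.support (u s) ⊆ S' ∪ {s} ∧ u s s = 1) := by
  classical
  obtain ⟨hustar_mem, hustar_ne, hustar_min⟩ := hustar
  -- orthogonality of range N and ker Nᵀ
  have orth : ∀ u ∈ LinearMap.ker Nᵀ.mulVecLin, ∀ v ∈ LinearMap.range N.mulVecLin,
      ∑ t, u t * v t = 0 := by
    rintro u hu v ⟨x, rfl⟩
    have hu' : Nᵀ.mulVec u = 0 := by rw [Matrix.mulVec_transpose]; simpa using hu
    have h1 : u ⬝ᵥ (N.mulVec x) = 0 := by
      rw [Matrix.dotProduct_mulVec, ← Matrix.mulVec_transpose, hu', zero_dotProduct]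
    simpa [Matrix.mulVecLin_apply, dotProduct] using h1
  -- the base set T = supp(ustar) \ {i}
  set T : Finset S := Finset.univ.filter (fun t => ustar t ≠ 0 ∧ t ≠ i) with hTdef
  have hiT : i ∉ T := by simp [hTdef]
  have hTindep : ∀ u ∈ LinearMap.ker Nᵀ.mulVecLin, (∀ t, t ∉ T → u t = 0) → u = 0 := by
    intro u hu hu0
    by_contra hne
    refine hustar_min u hu hne ⟨?_, ?_⟩
    · intro t ht
      have htT : t ∈ T := by
        by_contra h
        exact ht (hu0 t h)
      rw [hTdef] at htT
      simp only [Finset.mem_filter] at htT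
      exact htT.2.1
    · intro hsub
      have : u i ≠ 0 := hsub (Function.mem_support.mpr hi)
      exact this (hu0 i hiT)
  -- choose a maximal independent set S' containing T and avoiding i
  have hCfin : ({A : Finset S | T ⊆ A ∧ i ∉ A ∧
      ∀ u ∈ LinearMap.ker Nᵀ.mulVecLin, (∀ t, t ∉ A → u t = 0) → u = 0}).Finite :=
    Set.toFinite _
  have hCne : ({A : Finset S | T ⊆ A ∧ i ∉ A ∧
      ∀ u ∈ LinearMap.ker Nᵀ.mulVecLin, (∀ t, t ∉ A → u t = 0) → u = 0}).Nonempty :=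
    ⟨T, subset_rfl, hiT, hTindep⟩
  obtain ⟨S', hS'C, hS'max⟩ := Set.Finite.exists_maximalFor Finset.card _ hCfin hCne
  obtain ⟨hTS', hiS', hS'indep⟩ := hS'C
  -- any coordinate outside S' ∪ {i} yields a dependency
  have hdep : ∀ a, a ∉ S' → a ≠ i →
      ∃ u ∈ LinearMap.ker Nᵀ.mulVecLin, u ≠ 0 ∧ (∀ t, t ∉ insert a S' → u t = 0) ∧ u a ≠ 0 := by
    intro a ha hai
    by_cases hind : ∀ u ∈ LinearMap.ker Nᵀ.mulVecLin, (∀ t, t ∉ insert a S' → u t = 0) → u = 0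
    · exfalso
      have hmem : insert a S' ∈ {A : Finset S | T ⊆ A ∧ i ∉ A ∧
          ∀ u ∈ LinearMap.ker Nᵀ.mulVecLin, (∀ t, t ∉ A → u t = 0) → u = 0} := by
        refine ⟨hTS'.trans (Finset.subset_insert a S'), ?_, hind⟩
        simp only [Finset.mem_insert, not_or]
        exact ⟨fun h => hai h.symm, hiS'⟩
      have hle := hS'max hmem (Finset.card_le_card (Finset.subset_insert a S'))
      rw [Finset.card_insert_of_notMem ha] at hle
      omega
    · push_neg at hind
      obtain ⟨u, hu, hu0, hune⟩ := hind
      refine ⟨u, hu, hune, hu0, ?_⟩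
      intro hua
      refine hune (hS'indep u hu ?_)
      intro t ht
      by_cases hta : t = a
      · exact hta ▸ hua
      · exact hu0 t (by simp [Finset.mem_insert, hta, ht])
  -- every vector of range N vanishing on S' is zero
  have hW0 : ∀ v ∈ LinearMap.range N.mulVecLin, (∀ t ∈ S', v t = 0) → v = 0 := by
    intro v hv hv0
    funext a
    simp only [Pi.zero_apply]
    by_cases haS' : a ∈ S'
    · exact hv0 a haS'
    by_cases hai : a = i
    · subst hai
      have hsum := orth ustar hustar_mem v hv
      have heq : ∑ t, ustar t * v t = ustar a * v a := by
        apply Finset.sum_eq_single a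
        · intro t _ hta
          by_cases htS' : t ∈ S'
          · rw [hv0 t htS', mul_zero]
          · have hz : ustar t = 0 := by
              by_contra h'
              exact htS' (hTS' (by simp [hTdef, h', hta]))
            rw [hz, zero_mul]
        · intro h; exact absurd (Finset.mem_univ a) h
      rw [heq] at hsum
      exact (mul_eq_zero.mp hsum).resolve_left hi
    · obtain ⟨u, hu, hune, hu0, hua⟩ := hdep a haS' hai
      have hsum := orth u hu v hv
      have heq : ∑ t, u t * v t = u a * v a := by
        apply Finset.sum_eq_single a
        · intro t _ hta
          by_cases htS' : t ∈ S'
          · rw [hv0 t htS', mul_zero]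
          · rw [hu0 t (by simp [Finset.mem_insert, hta, htS']), zero_mul]
        · intro h; exact absurd (Finset.mem_univ a) h
      rw [heq] at hsum
      exact (mul_eq_zero.mp hsum).resolve_left hua
  -- construction of the w vectors (s ∈ S')
  have hb : ∀ s : S, ∃ ws : S → ℝ, s ∈ S' →
      IsElementary (LinearMap.range N.mulVecLin) ws ∧
      Function.support ws ⊆ (↑S' : Set S)ᶜ ∪ {s} ∧ ws s = 1 := by
    intro s
    by_cases hs : s ∈ S'
    swap
    · exact ⟨0, fun h => absurd h hs⟩
    set M : Matrix {x // x ∈ S'} R ℝ := Matrix.of (fun t r => N t.1 r) with hMdef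
    have hMt : ∀ u : {x // x ∈ S'} → ℝ, Mᵀ.mulVec u = 0 → u = 0 := by
      intro u hu
      set ue : S → ℝ := fun t => if h : t ∈ S' then u ⟨t, h⟩ else 0 with huedef
      have hue_mem : ue ∈ LinearMap.ker Nᵀ.mulVecLin := by
        rw [LinearMap.mem_ker]
        funext r
        simp only [Pi.zero_apply]
        have h5 : ∑ t ∈ S'.attach, N t.1 r * u t = 0 := by
          have h5' := congrFun hu r
          simpa [Matrix.mulVec, dotProduct, hMdef, Finset.univ_eq_attach,
            Matrix.transpose_apply] using h5'
        calc Nᵀ.mulVecLin ue r = ∑ t : S, N t r * ue t := by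
              simp [Matrix.mulVecLin_apply, Matrix.mulVec_transpose, Matrix.vecMul,
                Matrix.mulVec, dotProduct, Matrix.transpose_apply, mul_comm]
          _ = ∑ t ∈ S', N t r * ue t := by
              refine (Finset.sum_subset (Finset.subset_univ S') ?_).symm
              intro t _ ht
              rw [huedef]
              simp [ht]
          _ = ∑ t ∈ S'.attach, N t.1 r * ue t.1 := (Finset.sum_attach S' _).symm
          _ = ∑ t ∈ S'.attach, N t.1 r * u t :=
              Finset.sum_congr rfl (fun t _ => by rw [huedef]; simp [t.2])
          _ = 0 := h5
      have hz := hS'indep ue hue_mem (fun t ht => by rw [huedef]; simp [ht])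
      funext t
      have h2 := congrFun hz t.1
      rw [huedef] at h2
      simpa [t.2] using h2
    obtain ⟨x, hx⟩ := surjective_mulVecLin M hMt (Pi.single ⟨s, hs⟩ 1)
    set w0 : S → ℝ := N.mulVec x with hw0def
    have hw0mem : w0 ∈ LinearMap.range N.mulVecLin := ⟨x, rfl⟩
    have hw0S' : ∀ t (ht : t ∈ S'), w0 t = if t = s then 1 else 0 := by
      intro t ht
      have h1 := congrFun hx ⟨t, ht⟩
      have h2 : M.mulVecLin x ⟨t, ht⟩ = w0 t := by
        simp [Matrix.mulVecLin_apply, Matrix.mulVec, dotProduct, hMdef, hw0def]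
      rw [h2] at h1
      rw [h1, Pi.single_apply]
      simp [Subtype.ext_iff]
    have hw0s : w0 s = 1 := by rw [hw0S' s hs]; simp
    have hw0ne : w0 ≠ 0 := by
      intro h
      rw [h] at hw0s
      simp at hw0s
    obtain ⟨w1, hw1sub, hw1elem⟩ := exists_elementary _ hw0mem hw0ne
    have hw1s : w1 s ≠ 0 := by
      intro hzero
      apply hw1elem.2.1
      apply hW0 w1 hw1elem.1
      intro t ht
      by_cases hts : t = s
      · exact hts ▸ hzero
      · by_contra h'
        have h1 : w0 t ≠ 0 := hw1sub (Function.mem_support.mpr h')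
        apply h1
        rw [hw0S' t ht]
        simp [hts]
    refine ⟨(w1 s)⁻¹ • w1, fun _ =>
      ⟨isElementary_smul hw1elem (inv_ne_zero hw1s), ?_, ?_⟩⟩
    · intro t ht
      rw [Function.support_const_smul_of_ne_zero _ _ (inv_ne_zero hw1s)] at ht
      by_cases hts : t = s
      · exact Or.inr hts
      · left
        intro htS'
        have h1 : w0 t ≠ 0 := hw1sub ht
        apply h1
        rw [hw0S' t htS']
        simp [hts]
    · simp [inv_mul_cancel₀ hw1s]
  -- construction of the u vectors (s ∉ S')
  have hc : ∀ s : S, ∃ us : S → ℝ, s ∉ S' →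
      IsElementary (LinearMap.ker Nᵀ.mulVecLin) us ∧
      Function.support us ⊆ (↑S' : Set S) ∪ {s} ∧ us s = 1 := by
    intro s
    by_cases hs : s ∈ S'
    · exact ⟨0, fun h => absurd hs h⟩
    by_cases hsi : s = i
    · subst hsi
      refine ⟨(ustar s)⁻¹ • ustar, fun _ =>
        ⟨isElementary_smul ⟨hustar_mem, hustar_ne, hustar_min⟩ (inv_ne_zero hi), ?_,
          by simp [inv_mul_cancel₀ hi]⟩⟩
      intro t ht
      rw [Function.support_const_smul_of_ne_zero _ _ (inv_ne_zero hi)] at ht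
      by_cases hts : t = s
      · exact Or.inr hts
      · exact Or.inl (hTS' (by simp [hTdef, Function.mem_support.mp ht, hts]))
    · obtain ⟨u0, hu0mem, hu0ne, hu0supp, hu0s⟩ := hdep s hs hsi
      obtain ⟨u1, hu1sub, hu1elem⟩ := exists_elementary _ hu0mem hu0ne
      have hu1s : u1 s ≠ 0 := by
        intro hzero
        apply hu1elem.2.1
        apply hS'indep u1 hu1elem.1
        intro t ht
        by_cases hts : t = s
        · exact hts ▸ hzero
        · by_contra h'
          have h1 : u0 t ≠ 0 := hu1sub (Function.mem_support.mpr h')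
          exact h1 (hu0supp t (by simp [Finset.mem_insert, hts, ht]))
      refine ⟨(u1 s)⁻¹ • u1, fun _ =>
        ⟨isElementary_smul hu1elem (inv_ne_zero hu1s), ?_,
          by simp [inv_mul_cancel₀ hu1s]⟩⟩
      intro t ht
      rw [Function.support_const_smul_of_ne_zero _ _ (inv_ne_zero hu1s)] at ht
      by_cases hts : t = s
      · exact Or.inr hts
      · left
        by_contra htS'
        have h1 : u0 t ≠ 0 := hu1sub ht
        have htS'' : t ∉ S' := by simpa using htS'
        exact h1 (hu0supp t (by simp [Finset.mem_insert, hts, htS'']))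
  choose w hw using hb
  choose u hu using hc
  refine ⟨↑S', w, u, by simpa using hiS', ?_, ?_, ?_⟩
  · intro t ht
    by_cases hti : t = i
    · exact Or.inr hti
    · exact Or.inl (hTS' (by simp [hTdef, Function.mem_support.mp ht, hti]))
  · intro s hs
    exact hw s (by simpa using hs)
  · intro s hs
    exact hu s (by simpa using hs)
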